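/- arXiv:1407.4942 — 3 statements merged into one kernel-verified Lean document; each statement's English description precedes it below -/
import Mathlib

section
/- The function g(z) = (log(1/(1-z)))^2 on the unit disk satisfies sup_{a∈D} (1-|a|^2)^{1-λ} ∫_D |g'(z)|^2 (1-|φ_a(z)|^2) dm(z) < ∞ for every 0<λ<1, where φ_a(z)=(a-z)/(1-ā z); hence g belongs to the analytic Morrey space L^{2,λ}. -/
open MeasureTheory Real Set Filter Topology

noncomputable section

/-- The open unit disk in ℂ. -/
def UD : Set ℂ := Metric.ball 0 1

/-- The Möbius map φ_a(z) = (a - z)/(1 - ā z). -/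
def moeb (a z : ℂ) : ℂ := (a - z) / (1 - (starRingEnd ℂ) a * z)

/-- The Morrey quantity (1-|a|²)^{1-λ} ∫_D |f'(z)|² (1-|φ_a(z)|²) dm(z),
with dm normalized area measure (1/π)·(Lebesgue measure). -/
def morreyInt (lam : ℝ) (f : ℂ → ℂ) (a : ℂ) : ℝ :=
  (1 - ‖a‖ ^ 2) ^ (1 - lam) *
    (π⁻¹ * ∫ z in UD, ‖deriv f z‖ ^ 2 * (1 - ‖moeb a z‖ ^ 2))

/-- g(z) = (log(1/(1-z)))². -/
def gfun (z : ℂ) : ℂ := (Complex.log (1 / (1 - z))) ^ 2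

/-! ### Auxiliary lemmas -/

lemma mem_UD_iff {z : ℂ} : z ∈ UD ↔ ‖z‖ < 1 := by
  simp [UD, Metric.mem_ball, Complex.dist_eq]

lemma one_sub_ne {z : ℂ} (hz : ‖z‖ < 1) : (1 : ℂ) - z ≠ 0 := by
  intro h
  have hz1 : z = 1 := by linear_combination -h
  rw [hz1] at hz; simp at hz

lemma hasDerivAt_gfun {z : ℂ} (hz : ‖z‖ < 1) :
    HasDerivAt gfun (2 * Complex.log (1 / (1 - z)) * (1 - z)⁻¹) z := by
  have h1 : (1 : ℂ) - z ≠ 0 := one_sub_ne hz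
  have hre : 0 < (1 - z).re := by
    have h2 : z.re < 1 := lt_of_le_of_lt (Complex.re_le_norm z) hz
    simp only [Complex.sub_re, Complex.one_re]; linarith
  have hslit : ((1 - z)⁻¹ : ℂ) ∈ Complex.slitPlane := by
    left
    rw [Complex.inv_re]
    exact div_pos hre (Complex.normSq_pos.mpr h1)
  have hc : HasDerivAt (fun w : ℂ => 1 - w) (-1) z := (hasDerivAt_id z).const_sub 1
  have hinv := hc.inv h1
  have hlog := hinv.clog hslit
  have hpow := hlog.pow 2
  have hg : gfun = fun w : ℂ => Complex.log ((1 - w)⁻¹) ^ 2 := by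
    funext w; simp [gfun, one_div]
  rw [hg]
  simp only [one_div]
  refine hpow.congr_deriv ?_
  have h2 : ((1:ℂ) - z) ^ 2 ≠ 0 := pow_ne_zero _ h1
  simp only [Pi.inv_apply, neg_neg, Nat.add_one_sub_one, pow_one, Nat.cast_ofNat]
  field_simp

lemma abs_log_sq_le' (w : ℂ) :
    ‖Complex.log w‖ ^ 2 ≤ Real.log (‖w‖) ^ 2 + π ^ 2 := by
  have h1 : ‖Complex.log w‖ ^ 2 = Complex.normSq (Complex.log w) :=
    Complex.sq_norm _
  have h2 : Complex.normSq (Complex.log w)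
      = Real.log (‖w‖) ^ 2 + Complex.arg w ^ 2 := by
    rw [Complex.normSq_apply, Complex.log_re, Complex.log_im]; ring
  have h3 : Complex.arg w ^ 2 ≤ π ^ 2 :=
    sq_le_sq' (by linarith [Complex.neg_pi_lt_arg w]) (Complex.arg_le_pi w)
  rw [h1, h2]; linarith

lemma moeb_sq {a z : ℂ} (ha : ‖a‖ < 1) (hz : ‖z‖ < 1) :
    1 - ‖moeb a z‖ ^ 2 =
      (1 - ‖a‖ ^ 2) * (1 - ‖z‖ ^ 2)
        / ‖1 - (starRingEnd ℂ) a * z‖ ^ 2 := by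
  have habs : ‖(starRingEnd ℂ) a * z‖ < 1 := by
    rw [norm_mul, Complex.norm_conj]
    nlinarith [norm_nonneg a, norm_nonneg z]
  have hd : (1 : ℂ) - (starRingEnd ℂ) a * z ≠ 0 := by
    intro h
    have h2 : (starRingEnd ℂ) a * z = 1 := by linear_combination -h
    rw [h2] at habs; simp at habs
  have hD : (0:ℝ) < Complex.normSq (1 - (starRingEnd ℂ) a * z) := Complex.normSq_pos.mpr hd
  have key : Complex.normSq (1 - (starRingEnd ℂ) a * z) - Complex.normSq (a - z)
      = (1 - Complex.normSq a) * (1 - Complex.normSq z) := by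
    simp only [Complex.normSq_apply, Complex.sub_re, Complex.sub_im, Complex.mul_re,
      Complex.mul_im, Complex.one_re, Complex.one_im, Complex.conj_re, Complex.conj_im]
    ring
  rw [moeb, norm_div, div_pow, Complex.sq_norm, Complex.sq_norm, Complex.sq_norm, Complex.sq_norm]
  field_simp
  rw [mul_comm z, eq_div_iff hD.ne', sub_mul, div_mul_cancel₀ _ hD.ne']; linear_combination key

lemma weight_bound {lam : ℝ} (h0 : 0 < lam) (h1 : lam < 1) {a z : ℂ}
    (ha : ‖a‖ < 1) (hz : ‖z‖ < 1) :
    (1 - ‖a‖ ^ 2) ^ (1 - lam) * (1 - ‖moeb a z‖ ^ 2)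
      ≤ 8 * ‖1 - z‖ ^ (1 - lam) := by
  set A := 1 - ‖a‖ ^ 2 with hA
  set B := 1 - ‖z‖ ^ 2 with hB
  set D := ‖1 - (starRingEnd ℂ) a * z‖ with hDdef
  set t := 1 - ‖z‖ with ht
  have hA0 : 0 < A := by nlinarith [norm_nonneg a]
  have hB0 : 0 ≤ B := by nlinarith [norm_nonneg z]
  have ht0 : 0 < t := by simp only [ht]; linarith
  have hconj : ‖(starRingEnd ℂ) a * z‖ = ‖a‖ * ‖z‖ := by
    rw [norm_mul, Complex.norm_conj]
  have hDge : (1:ℝ) - ‖a‖ * ‖z‖ ≤ D := by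
    have h2 := norm_sub_norm_le (1 : ℂ) ((starRingEnd ℂ) a * z)
    simp only [norm_one] at h2
    rw [hconj] at h2
    simpa using h2
  have hDt : t ≤ D := by
    have : ‖a‖ * ‖z‖ ≤ ‖z‖ := by
      nlinarith [norm_nonneg z, norm_nonneg a]
    simp only [ht]; linarith
  have hAD : A ≤ 2 * D := by
    have : ‖a‖ * ‖z‖ ≤ ‖a‖ := by
      nlinarith [norm_nonneg z, norm_nonneg a]
    nlinarith [norm_nonneg a]
  have hD0 : 0 < D := lt_of_lt_of_le ht0 hDt
  have hBt : B ≤ 2 * t := by simp only [hB, ht]; nlinarith [norm_nonneg z]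
  have htz : t ≤ ‖1 - z‖ := by
    have h2 := norm_sub_norm_le (1 : ℂ) z
    simp only [norm_one] at h2
    simpa [ht] using h2
  have hexp0 : (0:ℝ) ≤ 1 - lam := by linarith
  rw [moeb_sq ha hz]
  calc A ^ (1 - lam) * (A * B / D ^ 2)
      ≤ (2 * D) ^ (1 - lam) * (2 * D * B / D ^ 2) := by
        gcongr
        all_goals first | exact hA0.le | exact hAD
    _ = (2:ℝ) ^ (1 - lam) * 2 * (B * D ^ (-lam)) := by
        rw [Real.mul_rpow (by norm_num) hD0.le]
        have hD2 : D ^ (-lam) * D = D ^ (1 - lam) := by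
          rw [show (1:ℝ) - lam = -lam + 1 by ring, Real.rpow_add hD0, Real.rpow_one]
        have hDne : D ≠ 0 := hD0.ne'
        field_simp [← hD2]
        rw [← hD2]; ring
    _ ≤ 2 * 2 * (2 * t * t ^ (-lam)) := by
        have h2 : (2:ℝ) ^ (1 - lam) ≤ 2 := by
          calc (2:ℝ) ^ (1 - lam) ≤ (2:ℝ) ^ (1:ℝ) :=
                Real.rpow_le_rpow_of_exponent_le one_le_two (by linarith)
            _ = 2 := Real.rpow_one 2
        have h3 : D ^ (-lam) ≤ t ^ (-lam) :=
          Real.rpow_le_rpow_of_nonpos ht0 hDt (by linarith)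
        have h4 : B * D ^ (-lam) ≤ 2 * t * t ^ (-lam) := by
          apply mul_le_mul hBt h3 (Real.rpow_nonneg hD0.le _) (by linarith)
        have h5 : (0:ℝ) ≤ B * D ^ (-lam) :=
          mul_nonneg hB0 (Real.rpow_nonneg hD0.le _)
        have h6 : (0:ℝ) ≤ 2 * t * t ^ (-lam) := by positivity
        nlinarith [Real.rpow_nonneg (show (0:ℝ) ≤ 2 by norm_num) (1 - lam)]
    _ = 8 * t ^ (1 - lam) := by
        have : t * t ^ (-lam) = t ^ (1 - lam) := by
          rw [show (1:ℝ) - lam = 1 + -lam by ring, Real.rpow_add ht0, Real.rpow_one]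
        rw [← this]; ring
    _ ≤ 8 * ‖1 - z‖ ^ (1 - lam) := by
        gcongr
        all_goals first | exact ht0.le | exact htz

lemma half_le_rpow {ε t : ℝ} (hε0 : 0 < ε) (hε1 : ε ≤ 1) (ht0 : 0 < t) (ht2 : t ≤ 2) :
    (1:ℝ)/2 ≤ t ^ (-ε) := by
  have h1 : t ^ ε ≤ 2 := by
    calc t ^ ε ≤ (2:ℝ) ^ ε := Real.rpow_le_rpow ht0.le ht2 hε0.le
      _ ≤ (2:ℝ) ^ (1:ℝ) := Real.rpow_le_rpow_of_exponent_le one_le_two hε1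
      _ = 2 := Real.rpow_one 2
  have h2 : (0:ℝ) < t ^ ε := Real.rpow_pos_of_pos ht0 _
  rw [Real.rpow_neg ht0.le]
  nlinarith [mul_inv_cancel₀ h2.ne']

lemma logsq {ε t : ℝ} (hε0 : 0 < ε) (hε1 : ε ≤ 1) (ht0 : 0 < t) (ht2 : t ≤ 2) :
    Real.log t ^ 2 ≤ (4 / ε ^ 2 + 2) * t ^ (-ε) := by
  have htε : (0:ℝ) < t ^ (-ε) := Real.rpow_pos_of_pos ht0 _
  rcases le_total t 1 with h | h
  · have hlog : Real.log t ^ 2 = Real.log t⁻¹ ^ 2 := by rw [Real.log_inv]; ring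
    have hti : (0:ℝ) < t⁻¹ := by positivity
    have h2 : Real.log t⁻¹ ≤ (t⁻¹) ^ (ε/2) / (ε/2) :=
      Real.log_le_rpow_div hti.le (by positivity)
    have h3 : 0 ≤ Real.log t⁻¹ := Real.log_nonneg (one_le_inv_iff₀.mpr ⟨ht0, h⟩)
    have h4 : Real.log t⁻¹ ^ 2 ≤ ((t⁻¹) ^ (ε/2) / (ε/2)) ^ 2 :=
      pow_le_pow_left₀ h3 h2 2
    have e1 : ((t⁻¹) ^ (ε/2)) ^ 2 = (t⁻¹) ^ ε := by
      rw [sq, ← Real.rpow_add hti]; norm_num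
    have h5 : ((t⁻¹) ^ (ε/2) / (ε/2)) ^ 2 = (t⁻¹) ^ ε * (4 / ε ^ 2) := by
      rw [div_pow, e1]
      field_simp
      ring
    have h6 : (t⁻¹) ^ ε = t ^ (-ε) := by
      rw [Real.inv_rpow ht0.le, ← Real.rpow_neg ht0.le]
    nlinarith
  · have h3 : 0 ≤ Real.log t := Real.log_nonneg h
    have h4 : Real.log t ≤ 1 := by
      have := Real.log_le_sub_one_of_pos ht0; linarith
    have h5 : Real.log t ^ 2 ≤ 1 := by nlinarith
    have h6 := half_le_rpow hε0 hε1 ht0 ht2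
    have h7 : (0:ℝ) ≤ 4 / ε ^ 2 * t ^ (-ε) := by positivity
    nlinarith

lemma master {lam : ℝ} (h0 : 0 < lam) (h1 : lam < 1) {a z : ℂ}
    (ha : ‖a‖ < 1) (hz : ‖z‖ < 1) :
    (1 - ‖a‖ ^ 2) ^ (1 - lam) *
        (‖deriv gfun z‖ ^ 2 * (1 - ‖moeb a z‖ ^ 2))
      ≤ 32 * (4 / ((1 - lam)/2) ^ 2 + 34) *
          ‖1 - z‖ ^ (-(1 + lam + (1 - lam)/2)) := by
  set ε := (1 - lam)/2 with hεdef
  set w := ‖1 - z‖ with hw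
  have hεpos : 0 < ε := by rw [hεdef]; linarith
  have hε1 : ε ≤ 1 := by rw [hεdef]; linarith
  have hw0 : 0 < w := by
    rw [hw]; exact norm_pos_iff.mpr (one_sub_ne hz)
  have hw2 : w ≤ 2 := by
    have h2 := norm_sub_le (1:ℂ) z
    simp only [norm_one] at h2
    rw [hw]; linarith
  have hderiv : deriv gfun z = 2 * Complex.log (1 / (1 - z)) * (1 - z)⁻¹ :=
    (hasDerivAt_gfun hz).deriv
  set C1 := 4 / ε ^ 2 + 34 with hC1
  have hC1pos : 0 < C1 := by rw [hC1]; positivity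
  have hX : ‖deriv gfun z‖ ^ 2 ≤ 4 * (C1 * w ^ (-ε)) / w ^ 2 := by
    rw [hderiv]
    have e1 : ‖2 * Complex.log (1 / (1 - z)) * (1 - z)⁻¹‖ ^ 2
        = 4 * ‖Complex.log (1 / (1 - z))‖ ^ 2 / w ^ 2 := by
      rw [norm_mul, norm_mul, norm_inv, Complex.norm_two, ← hw]
      field_simp
      ring
    rw [e1]
    have hLb : ‖Complex.log (1 / (1 - z))‖ ^ 2 ≤ C1 * w ^ (-ε) := by
      have h3 := abs_log_sq_le' (1 / (1 - z))
      have e2 : ‖1 / (1 - z)‖ = w⁻¹ := by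
        rw [norm_div, norm_one, ← hw, one_div]
      rw [e2, Real.log_inv, neg_sq] at h3
      have h4 := logsq hεpos hε1 hw0 hw2
      have h5 : π ^ 2 ≤ 32 * ((1:ℝ)/2) := by
        nlinarith [Real.pi_le_four, Real.pi_pos]
      have h6 := half_le_rpow hεpos hε1 hw0 hw2
      have h7 : π ^ 2 ≤ 32 * w ^ (-ε) := by nlinarith
      rw [hC1]
      nlinarith [Real.rpow_pos_of_pos hw0 (-ε)]
    gcongr
    all_goals exact hLb
  have hY : (1 - ‖a‖ ^ 2) ^ (1 - lam) * (1 - ‖moeb a z‖ ^ 2)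
      ≤ 8 * w ^ (1 - lam) := weight_bound h0 h1 ha hz
  have hA0 : (0:ℝ) ≤ 1 - ‖a‖ ^ 2 := by nlinarith [norm_nonneg a]
  have hB0 : (0:ℝ) ≤ 1 - ‖z‖ ^ 2 := by nlinarith [norm_nonneg z]
  have hY0 : 0 ≤ (1 - ‖a‖ ^ 2) ^ (1 - lam) * (1 - ‖moeb a z‖ ^ 2) := by
    refine mul_nonneg (Real.rpow_nonneg hA0 _) ?_
    rw [moeb_sq ha hz]
    exact div_nonneg (mul_nonneg hA0 hB0) (sq_nonneg _)
  have hR : 0 ≤ 4 * (C1 * w ^ (-ε)) / w ^ 2 := by positivity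
  calc (1 - ‖a‖ ^ 2) ^ (1 - lam) *
        (‖deriv gfun z‖ ^ 2 * (1 - ‖moeb a z‖ ^ 2))
      = ‖deriv gfun z‖ ^ 2 *
        ((1 - ‖a‖ ^ 2) ^ (1 - lam) * (1 - ‖moeb a z‖ ^ 2)) := by ring
    _ ≤ (4 * (C1 * w ^ (-ε)) / w ^ 2) * (8 * w ^ (1 - lam)) := mul_le_mul hX hY hY0 hR
    _ = 32 * C1 * (w ^ (-ε) * w ^ (1 - lam) / w ^ 2) := by ring
    _ = 32 * C1 * w ^ (-(1 + lam + ε)) := by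
        congr 1
        rw [← Real.rpow_add hw0, ← Real.rpow_natCast w 2, ← Real.rpow_sub hw0]
        congr 1
        push_cast; ring

lemma oneD {q : ℝ} (hq0 : 0 ≤ q) (hq1 : q < 1) :
    IntegrableOn (fun x : ℝ => |x| ^ (-q)) (Ioo (-2 : ℝ) 2) := by
  have hpos : IntegrableOn (fun x : ℝ => |x| ^ (-q)) (Ioo (0:ℝ) 2) := by
    have h := (intervalIntegral.integrableOn_Ioo_rpow_iff (by norm_num : (0:ℝ) < 2)).mpr
      (by linarith : (-1:ℝ) < -q)
    exact h.congr_fun (fun x hx => by rw [abs_of_pos hx.1]) measurableSet_Ioo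
  have hneg : IntegrableOn (fun x : ℝ => |x| ^ (-q)) (Ioo (-2:ℝ) 0) := by
    have h := ((Measure.measurePreserving_neg (volume : Measure ℝ)).integrableOn_comp_preimage
      (Homeomorph.neg ℝ).measurableEmbedding).mpr hpos
    have hs : (Neg.neg ⁻¹' Ioo (0:ℝ) 2 : Set ℝ) = Ioo (-2:ℝ) 0 := by
      ext x
      simp only [mem_preimage, mem_Ioo]
      constructor <;> rintro ⟨u, v⟩ <;> constructor <;> linarith
    rw [hs] at h
    exact h.congr_fun (fun x hx => by
      simp only [Function.comp_apply, abs_neg]) measurableSet_Ioo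
  have hzero : IntegrableOn (fun x : ℝ => |x| ^ (-q)) ({0} : Set ℝ) := by
    rw [IntegrableOn, Measure.restrict_eq_zero.mpr (by simp)]
    exact integrable_zero_measure
  have hsub : Ioo (-2:ℝ) 2 ⊆ Ioo (-2:ℝ) 0 ∪ ({0} ∪ Ioo (0:ℝ) 2) := by
    intro x hx
    rcases lt_trichotomy x 0 with h|h|h
    · exact Or.inl ⟨hx.1, h⟩
    · exact Or.inr (Or.inl (by simp [h]))
    · exact Or.inr (Or.inr ⟨h, hx.2⟩)
  exact (hneg.union (hzero.union hpos)).mono_set hsub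

lemma lemE {p : ℝ} (hp0 : 0 ≤ p) (hp2 : p < 2) :
    IntegrableOn (fun z : ℂ => ‖1 - z‖ ^ (-p)) UD := by
  set q := p / 2 with hq
  have hq0 : 0 ≤ q := by rw [hq]; linarith
  have hq1 : q < 1 := by rw [hq]; linarith
  have hbase := oneD hq0 hq1
  have hv : IntegrableOn (fun x : ℝ => |x| ^ (-q)) (Ioo (-1:ℝ) 1) :=
    hbase.mono_set (Ioo_subset_Ioo (by norm_num) (by norm_num))
  have hu : IntegrableOn (fun x : ℝ => |x - 1| ^ (-q)) (Ioo (-1:ℝ) 1) := by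
    have h := ((measurePreserving_sub_right (volume : Measure ℝ) 1).integrableOn_comp_preimage
      (MeasurableEquiv.subRight (1:ℝ)).measurableEmbedding).mpr hbase
    have hss : Ioo (-1:ℝ) 1 ⊆ (fun x : ℝ => x - 1) ⁻¹' Ioo (-2:ℝ) 2 := by
      intro x hx
      simp only [mem_preimage, mem_Ioo]
      exact ⟨by linarith [hx.1], by linarith [hx.2]⟩
    exact (h.mono_set hss).congr_fun
      (fun x hx => by simp only [Function.comp_apply]) measurableSet_Ioo
  have hprod : IntegrableOn (fun x : ℝ × ℝ => |x.1 - 1| ^ (-q) * |x.2| ^ (-q))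
      (Ioo (-1:ℝ) 1 ×ˢ Ioo (-1:ℝ) 1) := by
    rw [IntegrableOn, Measure.volume_eq_prod, ← Measure.prod_restrict]
    exact Integrable.mul_prod hu hv
  have hC : IntegrableOn (fun z : ℂ => |z.re - 1| ^ (-q) * |z.im| ^ (-q))
      (Complex.measurableEquivRealProd ⁻¹' (Ioo (-1:ℝ) 1 ×ˢ Ioo (-1:ℝ) 1)) := by
    have h := (Complex.volume_preserving_equiv_real_prod.integrableOn_comp_preimage
      (MeasurableEquiv.measurableEmbedding _)).mpr hprod
    exact h
  have hsub : UD ⊆ Complex.measurableEquivRealProd ⁻¹' (Ioo (-1:ℝ) 1 ×ˢ Ioo (-1:ℝ) 1) := by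
    intro z hz
    rw [mem_UD_iff] at hz
    have h1 := Complex.abs_re_le_norm z
    have h2 := Complex.abs_im_le_norm z
    have h3 := abs_lt.mp (lt_of_le_of_lt h1 hz)
    have h4 := abs_lt.mp (lt_of_le_of_lt h2 hz)
    simp only [mem_preimage, Complex.measurableEquivRealProd, MeasurableEquiv.coe_mk,
      Equiv.coe_fn_mk, mem_prod, mem_Ioo]
    exact ⟨⟨h3.1, h3.2⟩, ⟨h4.1, h4.2⟩⟩
  have hmaj : IntegrableOn (fun z : ℂ => |z.re - 1| ^ (-q) * |z.im| ^ (-q)) UD :=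
    hC.mono_set hsub
  have hnull : (volume : Measure ℂ) {z : ℂ | z.im = 0} = 0 := by
    have hset : {z : ℂ | z.im = 0}
        = Complex.measurableEquivRealProd ⁻¹' ((univ : Set ℝ) ×ˢ ({0} : Set ℝ)) := by
      ext z
      simp [Complex.measurableEquivRealProd, Complex.equivRealProd, eq_comm]
    rw [hset]
    rw [Complex.volume_preserving_equiv_real_prod.measure_preimage
      (MeasurableSet.nullMeasurableSet (MeasurableSet.univ.prod (measurableSet_singleton 0)))]
    rw [Measure.volume_eq_prod, Measure.prod_prod]
    simp
  have hae : ∀ᵐ z : ℂ ∂(volume.restrict UD), z.im ≠ 0 := by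
    refine ae_restrict_of_ae ?_
    rw [ae_iff]
    convert hnull using 2
    simp
  refine hmaj.mono' ?_ ?_
  · refine ContinuousOn.aestronglyMeasurable ?_ (by exact measurableSet_ball)
    refine ContinuousOn.rpow_const ?_ ?_
    · exact (continuous_norm.comp (continuous_const.sub continuous_id)).continuousOn
    · intro x hx
      left
      have hz : ‖x‖ < 1 := mem_UD_iff.mp hx
      have : (1:ℂ) - x ≠ 0 := by
        intro h
        have : x = 1 := by linear_combination -h
        rw [this] at hz; simp at hz
      exact (norm_pos_iff.mpr this).ne'
  · filter_upwards [ae_restrict_mem (by exact measurableSet_ball : MeasurableSet UD), hae]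
      with z hzUD hzim
    have hz : ‖z‖ < 1 := mem_UD_iff.mp hzUD
    have hre : z.re < 1 := lt_of_le_of_lt (Complex.re_le_norm z) hz
    set u := |z.re - 1| with hudef
    set v := |z.im| with hvdef
    have hu0 : 0 < u := by rw [hudef]; rw [abs_pos]; intro h; linarith [sub_eq_zero.mp h]
    have hv0 : 0 < v := abs_pos.mpr hzim
    have huv : u * v ≤ ‖1 - z‖ ^ 2 := by
      have e1 : ‖1 - z‖ ^ 2 = (1 - z.re) ^ 2 + z.im ^ 2 := by
        rw [Complex.sq_norm, Complex.normSq_apply, Complex.sub_re, Complex.sub_im,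
          Complex.one_re, Complex.one_im]
        ring
      rw [e1]
      have h5 : u = |1 - z.re| := by rw [hudef, abs_sub_comm]
      nlinarith [sq_nonneg (|1 - z.re| - |z.im|), sq_abs (1 - z.re), sq_abs z.im,
        abs_nonneg (1 - z.re), abs_nonneg z.im]
    have habs0 : 0 < ‖1 - z‖ := by
      have : (1:ℂ) - z ≠ 0 := by
        intro h
        have : z = 1 := by linear_combination -h
        rw [this] at hz; simp at hz
      exact norm_pos_iff.mpr this
    have hsq : Real.sqrt (u * v) ≤ ‖1 - z‖ := by
      have := Real.sqrt_le_sqrt huv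
      rwa [Real.sqrt_sq habs0.le] at this
    have hsq0 : 0 < Real.sqrt (u * v) := Real.sqrt_pos.mpr (by positivity)
    have hmain : ‖1 - z‖ ^ (-p) ≤ u ^ (-q) * v ^ (-q) := by
      calc ‖1 - z‖ ^ (-p) ≤ Real.sqrt (u * v) ^ (-p) :=
            Real.rpow_le_rpow_of_nonpos hsq0 hsq (by linarith)
        _ = (u * v) ^ (-q) := by
            rw [Real.sqrt_eq_rpow, ← Real.rpow_mul (by positivity : (0:ℝ) ≤ u * v)]
            congr 1
            rw [hq]; ring
        _ = u ^ (-q) * v ^ (-q) := Real.mul_rpow hu0.le hv0.le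
    have hnn : 0 ≤ ‖1 - z‖ ^ (-p) := Real.rpow_nonneg habs0.le _
    rw [Real.norm_eq_abs, abs_of_nonneg hnn]
    exact hmain

/-- for every 0 < λ < 1, the Morrey seminorm quantities of g are
uniformly bounded over a ∈ D, i.e. g ∈ L^{2,λ}. -/
theorem stmt0 (lam : ℝ) (h0 : 0 < lam) (h1 : lam < 1) :
    ∃ C : ℝ, ∀ a ∈ UD, morreyInt lam gfun a ≤ C := by
  have hp0 : (0:ℝ) ≤ 1 + lam + (1 - lam)/2 := by linarith
  have hp2 : 1 + lam + (1 - lam)/2 < 2 := by linarith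
  have hE := lemE hp0 hp2
  have hInt : IntegrableOn
      (fun z : ℂ => 32 * (4 / ((1 - lam)/2) ^ 2 + 34) *
        ‖1 - z‖ ^ (-(1 + lam + (1 - lam)/2))) UD :=
    hE.const_mul _
  refine ⟨π⁻¹ * ∫ z in UD, 32 * (4 / ((1 - lam)/2) ^ 2 + 34) *
      ‖1 - z‖ ^ (-(1 + lam + (1 - lam)/2)), ?_⟩
  intro a ha
  have haU : ‖a‖ < 1 := mem_UD_iff.mp ha
  have hmeas : Measurable fun z : ℂ =>
      (1 - ‖a‖ ^ 2) ^ (1 - lam) *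
        (‖deriv gfun z‖ ^ 2 * (1 - ‖moeb a z‖ ^ 2)) := by
    apply Measurable.const_mul
    apply Measurable.mul
    · exact (continuous_norm.measurable.comp (measurable_deriv gfun)).pow_const 2
    · apply Measurable.const_sub
      apply Measurable.pow_const
      apply continuous_norm.measurable.comp
      exact (measurable_const.sub measurable_id).div
        (measurable_const.sub (measurable_const.mul measurable_id))
  have hptwise : ∀ z ∈ UD,
      (1 - ‖a‖ ^ 2) ^ (1 - lam) *
        (‖deriv gfun z‖ ^ 2 * (1 - ‖moeb a z‖ ^ 2))
      ≤ 32 * (4 / ((1 - lam)/2) ^ 2 + 34) *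
        ‖1 - z‖ ^ (-(1 + lam + (1 - lam)/2)) := by
    intro z hzU
    exact master h0 h1 haU (mem_UD_iff.mp hzU)
  have hnn : ∀ z ∈ UD,
      0 ≤ (1 - ‖a‖ ^ 2) ^ (1 - lam) *
        (‖deriv gfun z‖ ^ 2 * (1 - ‖moeb a z‖ ^ 2)) := by
    intro z hzU
    have hzabs : ‖z‖ < 1 := mem_UD_iff.mp hzU
    have hA0 : (0:ℝ) ≤ 1 - ‖a‖ ^ 2 := by nlinarith [norm_nonneg a]
    have hB0 : (0:ℝ) ≤ 1 - ‖z‖ ^ 2 := by nlinarith [norm_nonneg z]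
    refine mul_nonneg (Real.rpow_nonneg hA0 _) (mul_nonneg (sq_nonneg _) ?_)
    rw [moeb_sq haU hzabs]
    exact div_nonneg (mul_nonneg hA0 hB0) (sq_nonneg _)
  have hlhsInt : IntegrableOn
      (fun z : ℂ => (1 - ‖a‖ ^ 2) ^ (1 - lam) *
        (‖deriv gfun z‖ ^ 2 * (1 - ‖moeb a z‖ ^ 2))) UD := by
    refine hInt.mono' hmeas.aestronglyMeasurable ?_
    filter_upwards [ae_restrict_mem (by exact measurableSet_ball : MeasurableSet UD)]
      with z hzU
    rw [Real.norm_eq_abs, abs_of_nonneg (hnn z hzU)]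
    exact hptwise z hzU
  have hIneq : (∫ z in UD, (1 - ‖a‖ ^ 2) ^ (1 - lam) *
        (‖deriv gfun z‖ ^ 2 * (1 - ‖moeb a z‖ ^ 2)))
      ≤ ∫ z in UD, 32 * (4 / ((1 - lam)/2) ^ 2 + 34) *
        ‖1 - z‖ ^ (-(1 + lam + (1 - lam)/2)) :=
    setIntegral_mono_on hlhsInt hInt (by exact measurableSet_ball) hptwise
  have e1 : (∫ z in UD, (1 - ‖a‖ ^ 2) ^ (1 - lam) *
        (‖deriv gfun z‖ ^ 2 * (1 - ‖moeb a z‖ ^ 2)))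
      = (1 - ‖a‖ ^ 2) ^ (1 - lam) *
        ∫ z in UD, ‖deriv gfun z‖ ^ 2 * (1 - ‖moeb a z‖ ^ 2) :=
    integral_const_mul _ _
  have e2 : morreyInt lam gfun a
      = π⁻¹ * ∫ z in UD, (1 - ‖a‖ ^ 2) ^ (1 - lam) *
        (‖deriv gfun z‖ ^ 2 * (1 - ‖moeb a z‖ ^ 2)) := by
    rw [morreyInt, e1]; ring
  rw [e2]
  exact mul_le_mul_of_nonneg_left hIneq (by positivity)
end
end

section
/- Let 0<λ<1 and b∈D. Define f_b(z) = (1-|b|^2)^{(1-λ)/2}(φ_b(z) - b), where φ_b(z)=(b-z)/(1-b̄ z). Then there is a constant C depending only on λ (not on b) such that sup_{a∈D}(1-|a|^2)^{1-λ}∫_D |f_b'(z)|^2(1-|φ_a(z)|^2)dm(z) ≤ C. -/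
open MeasureTheory Real Set Filter Topology
open scoped ENNReal

noncomputable section

lemma normSq_identity (a z : ℂ) :
    Complex.normSq (1 - (starRingEnd ℂ) a * z) - Complex.normSq (a - z)
      = (1 - Complex.normSq a) * (1 - Complex.normSq z) := by
  have h : (1 - (starRingEnd ℂ) a * z) * (starRingEnd ℂ) (1 - (starRingEnd ℂ) a * z)
      - (a - z) * (starRingEnd ℂ) (a - z)
      = (1 - a * (starRingEnd ℂ) a) * (1 - z * (starRingEnd ℂ) z) := by
    simp only [map_sub, map_mul, map_one, Complex.conj_conj]
    ring
  rw [Complex.mul_conj, Complex.mul_conj, Complex.mul_conj, Complex.mul_conj] at h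
  exact_mod_cast h

lemma one_sub_abs_le {c z : ℂ} : 1 - ‖c‖ * ‖z‖ ≤ ‖1 - c * z‖ := by
  have h := norm_add_le (1 - c * z) (c * z)
  simp only [sub_add_cancel, norm_one, norm_mul] at h
  linarith

lemma one_sub_ne_s4 {c z : ℂ} (h : ‖c‖ * ‖z‖ < 1) : (1 : ℂ) - c * z ≠ 0 := by
  intro hz
  have := one_sub_abs_le (c := c) (z := z)
  rw [hz] at this
  simp at this
  linarith

lemma abs_moeb_le {a z : ℂ} (ha : ‖a‖ < 1) (hz : ‖z‖ < 1) :
    ‖(a - z) / (1 - (starRingEnd ℂ) a * z)‖ ≤ 1 := by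
  have hca : ‖(starRingEnd ℂ) a‖ = ‖a‖ := Complex.norm_conj a
  have hprod : ‖(starRingEnd ℂ) a‖ * ‖z‖ < 1 := by
    rw [hca]
    nlinarith [norm_nonneg a, norm_nonneg z]
  have hne := one_sub_ne_s4 hprod
  have hkey : Complex.normSq (a - z) ≤ Complex.normSq (1 - (starRingEnd ℂ) a * z) := by
    have h2 := normSq_identity a z
    have h3 : Complex.normSq a < 1 := by
      rw [Complex.normSq_eq_norm_sq]; nlinarith [norm_nonneg a]
    have h4 : Complex.normSq z < 1 := by
      rw [Complex.normSq_eq_norm_sq]; nlinarith [norm_nonneg z]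
    nlinarith
  rw [norm_div, div_le_one (norm_pos_iff.mpr hne)]
  rw [Complex.normSq_eq_norm_sq, Complex.normSq_eq_norm_sq] at hkey
  exact (pow_le_pow_iff_left₀ (norm_nonneg _) (norm_nonneg _) two_ne_zero).mp hkey

lemma deriv_fb (b : ℂ) (K : ℝ) {z : ℂ}
    (hne : (1 : ℂ) - (starRingEnd ℂ) b * z ≠ 0) :
    deriv (fun z => (K : ℝ) * (moeb b z - b)) z
      = (K : ℂ) * (((starRingEnd ℂ) b * b - 1) / (1 - (starRingEnd ℂ) b * z) ^ 2) := by
  have hu : HasDerivAt (fun w : ℂ => b - w) (-1) z := (hasDerivAt_id z).const_sub b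
  have hv : HasDerivAt (fun w : ℂ => 1 - (starRingEnd ℂ) b * w) (-((starRingEnd ℂ) b)) z := by
    simpa using ((hasDerivAt_id z).const_mul ((starRingEnd ℂ) b)).const_sub 1
  have hdiv := hu.div hv hne
  have hmo : HasDerivAt (fun w => moeb b w - b)
      ((-1 * (1 - (starRingEnd ℂ) b * z) - (b - z) * -((starRingEnd ℂ) b)) /
        (1 - (starRingEnd ℂ) b * z) ^ 2) z := hdiv.sub_const b
  have := (hmo.const_mul (K : ℂ)).deriv
  rw [this]
  congr 1
  field_simp
  ring

lemma exists_dyadic {d t : ℝ} (hd : 0 < d) (ht : d ≤ t) :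
    ∃ k : ℕ, 2 ^ k * d ≤ t ∧ t < 2 ^ (k + 1) * d := by
  set n : ℕ := ⌊t / d⌋₊ with hn
  have htd : 1 ≤ t / d := (one_le_div hd).mpr ht
  have hn1 : 1 ≤ n := Nat.le_floor (by exact_mod_cast htd)
  refine ⟨Nat.log 2 n, ?_, ?_⟩
  · have h1 : (2 : ℕ) ^ Nat.log 2 n ≤ n := Nat.pow_log_le_self 2 (by omega)
    have h2 : ((n : ℝ)) ≤ t / d := Nat.floor_le (by positivity)
    have h3 : ((2 : ℝ)) ^ Nat.log 2 n ≤ (n : ℝ) := by exact_mod_cast h1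
    calc (2:ℝ) ^ Nat.log 2 n * d ≤ (t / d) * d := by
          apply mul_le_mul_of_nonneg_right (le_trans h3 h2) hd.le
      _ = t := div_mul_cancel₀ t hd.ne'
  · have h1 : n < 2 ^ (Nat.log 2 n + 1) := Nat.lt_pow_succ_log_self (by norm_num) n
    have h2 : t / d < (n : ℝ) + 1 := Nat.lt_floor_add_one _
    have h3 : ((n : ℝ)) + 1 ≤ (2 : ℝ) ^ (Nat.log 2 n + 1) := by exact_mod_cast h1
    have : t / d < (2 : ℝ) ^ (Nat.log 2 n + 1) := lt_of_lt_of_le h2 h3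
    calc t = (t / d) * d := (div_mul_cancel₀ t hd.ne').symm
      _ < 2 ^ (Nat.log 2 n + 1) * d := by apply mul_lt_mul_of_pos_right this hd

lemma arith_final {β K p : ℝ} (hβ0 : 0 ≤ β) (hβ1 : β < 1) (hK2 : K ^ 2 ≤ 1) (hp : 0 < p) :
    K ^ 2 * (1 - β ^ 2) ^ 2 * (64 * p / (1 - β) ^ 2) ≤ p * 256 := by
  have hd : 0 < 1 - β := by linarith
  have hEq : K ^ 2 * (1 - β ^ 2) ^ 2 * (64 * p / (1 - β) ^ 2)
      = 64 * p * (K ^ 2 * (1 + β) ^ 2) := by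
    field_simp
    ring
  rw [hEq]
  have h1 : K ^ 2 * (1 + β) ^ 2 ≤ 4 := by nlinarith [sq_nonneg K, sq_nonneg (1 + β)]
  nlinarith [mul_le_mul_of_nonneg_left h1 (le_of_lt hp)]

lemma key_bound (c : ℂ) (hc : ‖c‖ < 1) :
    ∫⁻ z in UD, ENNReal.ofReal ((‖1 - c * z‖ ^ 4)⁻¹)
      ≤ ENNReal.ofReal (64 * π / (1 - ‖c‖) ^ 2) := by
  set β := ‖c‖ with hβ
  have hβ0 : 0 ≤ β := norm_nonneg c
  have hUDm : MeasurableSet UD := measurableSet_ball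
  have habs : ∀ z ∈ UD, ‖z‖ < 1 := by
    intro z hz
    simpa [UD, Complex.dist_eq] using Metric.mem_ball.mp hz
  have hlow : ∀ z ∈ UD, 1 - β ≤ ‖1 - c * z‖ := by
    intro z hz
    have h1 := one_sub_abs_le (c := c) (z := z)
    have h2 := habs z hz
    nlinarith [norm_nonneg z]
  have hd : 0 < 1 - β := by linarith
  have hpi : (0:ℝ) < π := Real.pi_pos
  by_cases hb2 : β ≤ 1 / 2
  · -- pointwise bound by 16
    calc ∫⁻ z in UD, ENNReal.ofReal ((‖1 - c * z‖ ^ 4)⁻¹)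
        ≤ ∫⁻ _ in UD, ENNReal.ofReal 16 := by
          apply setLIntegral_mono' hUDm
          intro z hz
          apply ENNReal.ofReal_le_ofReal
          have h1 := hlow z hz
          have h2 : (1:ℝ)/2 ≤ ‖1 - c * z‖ := by linarith
          have h3 : (1/16 : ℝ) ≤ ‖1 - c * z‖ ^ 4 := by
            have := pow_le_pow_left₀ (by norm_num : (0:ℝ) ≤ 1/2) h2 4
            norm_num at this
            linarith
          calc (‖1 - c * z‖ ^ 4)⁻¹ ≤ (1/16 : ℝ)⁻¹ := by
                apply inv_anti₀ (by norm_num) h3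
            _ = 16 := by norm_num
      _ = ENNReal.ofReal 16 * volume UD := setLIntegral_const _ _
      _ = ENNReal.ofReal 16 * ENNReal.ofReal π := by
          have hvol : volume UD = ENNReal.ofReal π := by
            rw [show UD = Metric.ball (0:ℂ) 1 from rfl, Complex.volume_ball]
            simp [← NNReal.coe_real_pi, ENNReal.ofReal_coe_nnreal]
          rw [hvol]
      _ = ENNReal.ofReal (16 * π) := (ENNReal.ofReal_mul (by norm_num)).symm
      _ ≤ ENNReal.ofReal (64 * π / (1 - β) ^ 2) := by
          apply ENNReal.ofReal_le_ofReal
          rw [le_div_iff₀ (by positivity)]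
          have hsq : (1 - β) ^ 2 ≤ 1 := by nlinarith
          nlinarith [mul_le_mul_of_nonneg_left hsq (by positivity : (0:ℝ) ≤ 16 * π)]
  · push_neg at hb2
    have hβpos : (0:ℝ) < β := by linarith
    have hc0 : c ≠ 0 := by
      intro h
      rw [h] at hβ
      simp only [norm_zero] at hβ
      rw [hβ] at hb2
      norm_num at hb2
    set d := 1 - β with hdd
    set S : ℕ → Set ℂ := fun k => Metric.ball (c⁻¹) (2 ^ (k + 1) * d / β) with hS
    have habs_eq : ∀ z : ℂ, ‖1 - c * z‖ = β * ‖z - c⁻¹‖ := by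
      intro z
      have : (1 : ℂ) - c * z = -(c * (z - c⁻¹)) := by
        field_simp
        ring
      rw [this, norm_neg, norm_mul]
    have hpt : ∀ z ∈ UD, ENNReal.ofReal ((‖1 - c * z‖ ^ 4)⁻¹)
        ≤ ∑' k, (S k).indicator (fun _ => ENNReal.ofReal (((2 ^ k * d) ^ 4)⁻¹)) z := by
      intro z hz
      obtain ⟨k, hk1, hk2⟩ := exists_dyadic hd (hlow z hz)
      refine le_trans ?_ (ENNReal.le_tsum k)
      have hzS : z ∈ S k := by
        rw [hS]
        simp only [Metric.mem_ball, Complex.dist_eq]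
        rw [lt_div_iff₀ hβpos, mul_comm]
        rw [habs_eq] at hk2
        exact hk2
      rw [Set.indicator_of_mem hzS]
      apply ENNReal.ofReal_le_ofReal
      apply inv_anti₀ (by positivity)
      exact pow_le_pow_left₀ (by positivity) hk1 4
    calc ∫⁻ z in UD, ENNReal.ofReal ((‖1 - c * z‖ ^ 4)⁻¹)
        ≤ ∫⁻ z in UD, ∑' k, (S k).indicator (fun _ => ENNReal.ofReal (((2 ^ k * d) ^ 4)⁻¹)) z :=
          setLIntegral_mono' hUDm hpt
      _ = ∑' k, ∫⁻ z in UD, (S k).indicator (fun _ => ENNReal.ofReal (((2 ^ k * d) ^ 4)⁻¹)) z :=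
          lintegral_tsum fun k => (measurable_const.indicator measurableSet_ball).aemeasurable
      _ ≤ ∑' k, ENNReal.ofReal (16 * π / d ^ 2) * ENNReal.ofReal 4⁻¹ ^ k := by
          apply ENNReal.tsum_le_tsum
          intro k
          calc ∫⁻ z in UD, (S k).indicator (fun _ => ENNReal.ofReal (((2 ^ k * d) ^ 4)⁻¹)) z
              ≤ ∫⁻ z, (S k).indicator (fun _ => ENNReal.ofReal (((2 ^ k * d) ^ 4)⁻¹)) z :=
                setLIntegral_le_lintegral _ _
            _ = ENNReal.ofReal (((2 ^ k * d) ^ 4)⁻¹) * volume (S k) :=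
                lintegral_indicator_const measurableSet_ball _
            _ = ENNReal.ofReal (((2 ^ k * d) ^ 4)⁻¹) *
                  (ENNReal.ofReal (2 ^ (k + 1) * d / β) ^ 2 * ENNReal.ofReal π) := by
                rw [hS]
                rw [Complex.volume_ball]
                simp [← NNReal.coe_real_pi, ENNReal.ofReal_coe_nnreal]
            _ = ENNReal.ofReal (((2 ^ k * d) ^ 4)⁻¹ * ((2 ^ (k + 1) * d / β) ^ 2 * π)) := by
                rw [← ENNReal.ofReal_pow (by positivity), ← ENNReal.ofReal_mul (by positivity),
                  ← ENNReal.ofReal_mul (by positivity)]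
            _ ≤ ENNReal.ofReal (16 * π / d ^ 2 * 4⁻¹ ^ k) := by
                apply ENNReal.ofReal_le_ofReal
                have hEq : ∀ y : ℝ, 0 < y →
                    ((y * d) ^ 4)⁻¹ * ((2 * y * d / β) ^ 2 * π)
                      = 4 * π / (d ^ 2 * β ^ 2) * (y ^ 2)⁻¹ := by
                  intro y hy
                  field_simp
                  ring
                rw [show (2:ℝ) ^ (k+1) = 2 * 2 ^ k by ring, hEq ((2:ℝ) ^ k) (by positivity)]
                have h44 : ((2:ℝ) ^ k) ^ 2 = 4 ^ k := by
                  rw [← pow_mul, mul_comm, pow_mul]; norm_num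
                rw [h44, ← inv_pow]
                have hβsq : (1:ℝ)/4 ≤ β ^ 2 := by nlinarith
                have h1 : 4 * π / (d ^ 2 * β ^ 2) ≤ 16 * π / d ^ 2 := by
                  rw [div_le_div_iff₀ (by positivity) (by positivity)]
                  nlinarith [mul_pos hpi (mul_pos (mul_pos hd hd) (mul_pos hβpos hβpos))]
                apply mul_le_mul_of_nonneg_right h1 (by positivity)
            _ = ENNReal.ofReal (16 * π / d ^ 2) * ENNReal.ofReal 4⁻¹ ^ k := by
                rw [ENNReal.ofReal_mul (by positivity), ENNReal.ofReal_pow (by norm_num)]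
      _ = ENNReal.ofReal (16 * π / d ^ 2) * ∑' k, ENNReal.ofReal 4⁻¹ ^ k :=
          ENNReal.tsum_mul_left
      _ ≤ ENNReal.ofReal (16 * π / d ^ 2) * 4 := by
          apply mul_le_mul_right
          rw [ENNReal.tsum_geometric]
          rw [ENNReal.inv_le_iff_inv_le]
          have h1 : (1:ℝ≥0∞) - ENNReal.ofReal 4⁻¹ = ENNReal.ofReal (3/4) := by
            rw [← ENNReal.ofReal_one, ← ENNReal.ofReal_sub _ (by norm_num)]
            norm_num
          rw [h1]
          have h2 : (4:ℝ≥0∞)⁻¹ = ENNReal.ofReal 4⁻¹ := by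
            rw [ENNReal.ofReal_inv_of_pos (by norm_num)]
            norm_num
          rw [h2]
          exact ENNReal.ofReal_le_ofReal (by norm_num)
      _ ≤ ENNReal.ofReal (64 * π / d ^ 2) := by
          rw [(by norm_num : (4:ℝ≥0∞) = ENNReal.ofReal 4), ← ENNReal.ofReal_mul (by positivity)]
          apply ENNReal.ofReal_le_ofReal
          apply le_of_eq
          ring

/-- the test functions f_b(z) = (1-|b|²)^{(1-λ)/2}(φ_b(z)-b) have
Morrey seminorms bounded by a constant depending only on λ. -/
theorem stmt4 (lam : ℝ) (h0 : 0 < lam) (h1 : lam < 1) :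
    ∃ C : ℝ, ∀ b ∈ UD, ∀ a ∈ UD,
      morreyInt lam
        (fun z => (((1 - ‖b‖ ^ 2) ^ ((1 - lam) / 2) : ℝ) : ℂ) * (moeb b z - b)) a ≤ C := by
  refine ⟨256, ?_⟩
  intro b hb a ha
  have hb1 : ‖b‖ < 1 := by simpa [UD, Complex.dist_eq] using Metric.mem_ball.mp hb
  have ha1 : ‖a‖ < 1 := by simpa [UD, Complex.dist_eq] using Metric.mem_ball.mp ha
  have habs : ∀ z ∈ UD, ‖z‖ < 1 := by
    intro z hz
    simpa [UD, Complex.dist_eq] using Metric.mem_ball.mp hz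
  have hUDm : MeasurableSet UD := measurableSet_ball
  have hA1 : (1 - ‖a‖ ^ 2) ^ (1 - lam) ≤ 1 := by
    apply Real.rpow_le_one (by nlinarith [norm_nonneg a])
      (by nlinarith [norm_nonneg a]) (by linarith)
  have hA0 : 0 ≤ (1 - ‖a‖ ^ 2) ^ (1 - lam) :=
    Real.rpow_nonneg (by nlinarith [norm_nonneg a]) _
  have hpi : (0:ℝ) < π := Real.pi_pos
  set β := ‖b‖ with hβ
  have hβ0 : 0 ≤ β := norm_nonneg b
  set c : ℂ := (starRingEnd ℂ) b with hcdef
  have hcabs : ‖c‖ = β := Complex.norm_conj b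
  set K : ℝ := (1 - β ^ 2) ^ ((1 - lam) / 2) with hKdef
  have hK0 : 0 ≤ K := Real.rpow_nonneg (by nlinarith) _
  set f : ℂ → ℂ := fun z => (K : ℂ) * (moeb b z - b) with hfdef
  set M : ℝ := K ^ 2 * (1 - β ^ 2) ^ 2 with hMdef
  have hM0 : 0 ≤ M := by positivity
  -- pointwise facts on UD
  have hne : ∀ z ∈ UD, (1 : ℂ) - c * z ≠ 0 := by
    intro z hz
    apply one_sub_ne_s4
    rw [hcabs]
    nlinarith [norm_nonneg z, habs z hz]
  have htpos : ∀ z ∈ UD, 0 < ‖1 - c * z‖ := fun z hz => norm_pos_iff.mpr (hne z hz)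
  have hderiv : ∀ z ∈ UD, ‖deriv f z‖ ^ 2 = M * (‖1 - c * z‖ ^ 4)⁻¹ := by
    intro z hz
    rw [hfdef, deriv_fb b K (hne z hz)]
    have hnum : c * b - 1 = ((β ^ 2 - 1 : ℝ) : ℂ) := by
      rw [hcdef, mul_comm, Complex.mul_conj, hβ, ← Complex.normSq_eq_norm_sq]
      push_cast
      ring
    rw [norm_mul, norm_div, hnum, norm_pow]
    rw [Complex.norm_real, Complex.norm_real, Real.norm_eq_abs, Real.norm_eq_abs]
    have h2 : |(β ^ 2 - 1 : ℝ)| = 1 - β ^ 2 := by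
      rw [abs_of_nonpos (by nlinarith)]; ring
    rw [h2, abs_of_nonneg hK0]
    have ht := htpos z hz
    rw [hMdef]
    rw [← hcdef]
    field_simp
  have hmoeb : ∀ z ∈ UD, 0 ≤ 1 - ‖moeb a z‖ ^ 2 ∧
      1 - ‖moeb a z‖ ^ 2 ≤ 1 := by
    intro z hz
    have h2 := abs_moeb_le ha1 (habs z hz)
    have h3 := norm_nonneg (moeb a z)
    constructor
    · rw [moeb]
      nlinarith [abs_moeb_le ha1 (habs z hz),
        norm_nonneg ((a - z) / (1 - (starRingEnd ℂ) a * z))]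
    · nlinarith
  set F : ℂ → ℝ := fun z => ‖deriv f z‖ ^ 2 * (1 - ‖moeb a z‖ ^ 2)
    with hFdef
  have hFnonneg : ∀ z ∈ UD, 0 ≤ F z := by
    intro z hz
    exact mul_nonneg (by positivity) (hmoeb z hz).1
  have hFle : ∀ z ∈ UD, F z ≤ M * (‖1 - c * z‖ ^ 4)⁻¹ := by
    intro z hz
    calc F z ≤ ‖deriv f z‖ ^ 2 * 1 := by
          apply mul_le_mul_of_nonneg_left (hmoeb z hz).2 (by positivity)
      _ = M * (‖1 - c * z‖ ^ 4)⁻¹ := by rw [mul_one, hderiv z hz]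
  -- measurability
  have hFmeas : AEStronglyMeasurable F (volume.restrict UD) := by
    apply Measurable.aestronglyMeasurable
    apply Measurable.mul
    · apply Measurable.pow_const
      exact continuous_norm.measurable.comp (measurable_deriv f)
    · apply Measurable.const_sub
      apply Measurable.pow_const
      apply continuous_norm.measurable.comp
      unfold moeb
      apply Measurable.div
      · exact measurable_const.sub measurable_id
      · exact measurable_const.sub (measurable_const.mul measurable_id)
  -- the integral
  set I : ℝ := ∫ z in UD, F z with hIdef
  have hI0 : 0 ≤ I := setIntegral_nonneg hUDm hFnonneg
  have hIeq : I = (∫⁻ z in UD, ENNReal.ofReal (F z)).toReal := by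
    apply integral_eq_lintegral_of_nonneg_ae ?_ hFmeas
    rw [EventuallyLE, ae_restrict_iff' hUDm]
    exact Eventually.of_forall (fun z hz => hFnonneg z hz)
  have hlin : (∫⁻ z in UD, ENNReal.ofReal (F z))
      ≤ ENNReal.ofReal (M * (64 * π / (1 - β) ^ 2)) := by
    calc (∫⁻ z in UD, ENNReal.ofReal (F z))
        ≤ ∫⁻ z in UD, ENNReal.ofReal M * ENNReal.ofReal ((‖1 - c * z‖ ^ 4)⁻¹) := by
          apply setLIntegral_mono' hUDm
          intro z hz
          rw [← ENNReal.ofReal_mul hM0]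
          exact ENNReal.ofReal_le_ofReal (hFle z hz)
      _ = ENNReal.ofReal M * ∫⁻ z in UD, ENNReal.ofReal ((‖1 - c * z‖ ^ 4)⁻¹) :=
          lintegral_const_mul' _ _ ENNReal.ofReal_ne_top
      _ ≤ ENNReal.ofReal M * ENNReal.ofReal (64 * π / (1 - β) ^ 2) := by
          apply mul_le_mul_right
          have := key_bound c (by rw [hcabs]; exact hb1)
          rw [hcabs] at this
          exact this
      _ = ENNReal.ofReal (M * (64 * π / (1 - β) ^ 2)) := (ENNReal.ofReal_mul hM0).symm
  have hIle : I ≤ M * (64 * π / (1 - β) ^ 2) := by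
    rw [hIeq]
    exact ENNReal.toReal_le_of_le_ofReal (by positivity) hlin
  -- final arithmetic
  have hK2 : K ^ 2 ≤ 1 := by
    have hKle : K ≤ 1 := by
      apply Real.rpow_le_one (by nlinarith) (by nlinarith) (by linarith)
    exact pow_le_one₀ hK0 hKle
  have hfinal : M * (64 * π / (1 - β) ^ 2) ≤ π * 256 := by
    rw [hMdef]
    exact arith_final hβ0 hb1 hK2 hpi
  have hmid : π⁻¹ * I ≤ 256 := by
    calc π⁻¹ * I ≤ π⁻¹ * (π * 256) := by
          apply mul_le_mul_of_nonneg_left (le_trans hIle hfinal) (by positivity)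
      _ = 256 := by field_simp
  have hmid0 : 0 ≤ π⁻¹ * I := mul_nonneg (by positivity) hI0
  have hgoal : morreyInt lam f a = (1 - ‖a‖ ^ 2) ^ (1 - lam) * (π⁻¹ * I) := by
    rw [hIdef, hFdef, morreyInt]
  rw [hgoal]
  calc (1 - ‖a‖ ^ 2) ^ (1 - lam) * (π⁻¹ * I) ≤ 1 * 256 := by
        apply mul_le_mul hA1 hmid hmid0 (by norm_num)
    _ = 256 := by norm_num
end
end

section
/- Let 0<λ<1 and p>1, and let g be analytic on D with M(g) := sup_{I⊂∂D}((1/|I|^{p-λ+1})∫_{S(I)}|g'(z)|^2(1-|z|^2)^p dm(z))^{1/2} < ∞. Then for every arc I⊂∂D, ∫_{S(I)}|g'(z)|^2(1-|z|^2)^{p+λ-1} dm(z) ≤ C·M(g)^2·|I|^p, where C depends only on p and λ. -/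
open MeasureTheory Real Set Filter Topology
open scoped ENNReal NNReal

noncomputable section

/-- The Carleson box S(I) over the arc I of normalized length h centered at e^{iθ}:
S(I) = {z ∈ D : 1-h ≤ |z| < 1, z/|z| ∈ I}. -/
def carleson (θ h : ℝ) : Set ℂ :=
  {z : ℂ | 1 - h ≤ ‖z‖ ∧ ‖z‖ < 1 ∧
    |Complex.arg (z * Complex.exp (-((θ : ℂ) * Complex.I)))| ≤ π * h}

lemma arg_shift_le (w : ℂ) (δ : ℝ) (h : |Complex.arg w - δ| ≤ π) :
    |Complex.arg (w * Complex.exp (-((δ:ℂ) * Complex.I)))| ≤ |Complex.arg w - δ| := by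
  rcases eq_or_ne w 0 with rfl | hw
  · simp
  · nth_rewrite 1 [← Complex.norm_mul_exp_arg_mul_I w]
    rw [mul_assoc, ← Complex.exp_add]
    have : (Complex.arg w : ℂ) * Complex.I + -((δ:ℂ) * Complex.I)
        = ((Complex.arg w - δ : ℝ) : ℂ) * Complex.I := by push_cast; ring
    rw [this, Complex.arg_real_mul _ (norm_pos_iff.mpr hw), Complex.arg_exp_mul_I]
    set x := Complex.arg w - δ
    have hpp : (0:ℝ) < 2 * π := by positivity
    rcases eq_or_lt_of_le (neg_le_of_abs_le h) with hx | hx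
    · rw [← hx]
      have h2 : toIocMod hpp (-π) (-π) = toIocMod hpp (-π) (-π + 2*π) :=
        (toIocMod_add_right hpp _ _).symm
      rw [h2, (toIocMod_eq_self hpp).mpr ⟨by linarith [Real.pi_pos], le_refl _⟩]
      have h3 : -π + 2*π = π := by ring
      rw [h3, abs_neg]
    · rw [(toIocMod_eq_self hpp).mpr ⟨hx, by linarith [le_of_abs_le h]⟩]

lemma carleson_meas (θ h : ℝ) : MeasurableSet (carleson θ h) := by
  refine (measurableSet_le measurable_const continuous_norm.measurable).inter
    ((measurableSet_lt continuous_norm.measurable measurable_const).inter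
      (measurableSet_le ((Complex.measurable_arg.comp
        (measurable_id.mul_const _)).abs) measurable_const))

lemma carleson_subset {θ δ h h' : ℝ} (h'0 : 0 < h') (hh : h ≤ 1)
    (hδ : |δ| ≤ π * h - π * h') : carleson (θ + δ) h' ⊆ carleson θ h := by
  have hpi := Real.pi_pos
  have hd0 := abs_nonneg δ
  have hh' : h' ≤ h := by nlinarith
  rintro z ⟨hz1, hz2, hz3⟩
  refine ⟨by linarith, hz2, ?_⟩
  set u := z * Complex.exp (-(((θ + δ : ℝ) : ℂ) * Complex.I)) with hu
  have key : z * Complex.exp (-(((θ:ℝ):ℂ) * Complex.I))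
      = u * Complex.exp (-(((-δ : ℝ):ℂ) * Complex.I)) := by
    rw [hu, mul_assoc, ← Complex.exp_add]
    congr 1
    push_cast; ring
  rw [key]
  have harg : |Complex.arg u - (-δ)| ≤ π * h := by
    calc |Complex.arg u - (-δ)| = |Complex.arg u + δ| := by ring_nf
      _ ≤ |Complex.arg u| + |δ| := abs_add_le _ _
      _ ≤ π * h' + (π * h - π * h') := add_le_add hz3 hδ
      _ = π * h := by ring
  have hπh : π * h ≤ π := by nlinarith
  exact le_trans (arg_shift_le u (-δ) (le_trans harg hπh)) harg

lemma midpoint_select (a hh h' : ℝ) (hpos : 0 < h') (n : ℕ) (hsum : (2:ℝ)^n * h' = hh)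
    (ha : |a| ≤ π * hh) :
    ∃ m : ℕ, m < 2^n ∧ |a - (-π * hh + (2*(m:ℝ)+1) * (π * h'))| ≤ π * h' := by
  have hpi := Real.pi_pos
  have h1n : 1 ≤ 2^n := Nat.one_le_two_pow
  have h2n : (1:ℝ) ≤ (2:ℝ)^n := by exact_mod_cast h1n
  have hhpos : 0 < hh := by nlinarith
  set t := (a + π * hh) / (2 * π * h') with ht
  have ht0 : 0 ≤ t := by
    apply div_nonneg _ (by positivity)
    have := neg_le_of_abs_le ha; linarith
  by_cases hcase : ⌊t⌋₊ ≤ 2^n - 1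
  · refine ⟨⌊t⌋₊, by omega, ?_⟩
    have hfl : (⌊t⌋₊ : ℝ) ≤ t := Nat.floor_le ht0
    have hfu : t < ⌊t⌋₊ + 1 := Nat.lt_floor_add_one t
    rw [abs_le]
    have e1 : (⌊t⌋₊:ℝ) * (2 * π * h') ≤ a + π * hh := by
      rw [ht] at hfl
      calc (⌊t⌋₊:ℝ) * (2 * π * h') ≤ ((a + π * hh)/(2*π*h')) * (2*π*h') :=
        mul_le_mul_of_nonneg_right hfl (by positivity)
        _ = a + π * hh := by field_simp
    have e2 : a + π * hh < ((⌊t⌋₊:ℝ) + 1) * (2 * π * h') := by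
      rw [ht] at hfu
      calc a + π * hh = ((a + π * hh)/(2*π*h')) * (2*π*h') := by field_simp
        _ < ((⌊t⌋₊:ℝ) + 1) * (2*π*h') := by
          apply mul_lt_mul_of_pos_right hfu (by positivity)
    constructor <;> nlinarith
  · push_neg at hcase
    have hge : (2:ℝ)^n ≤ ⌊t⌋₊ := by
      have : 2^n ≤ ⌊t⌋₊ := by omega
      calc ((2:ℝ))^n = ((2^n : ℕ) : ℝ) := by push_cast; ring
        _ ≤ (⌊t⌋₊ : ℝ) := by exact_mod_cast Nat.cast_le.mpr this
    have hfl : (⌊t⌋₊ : ℝ) ≤ t := Nat.floor_le ht0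
    have haeq : a = π * hh := by
      have htge : (2:ℝ)^n ≤ t := le_trans hge hfl
      have : (2:ℝ)^n * (2 * π * h') ≤ a + π * hh := by
        rw [ht] at htge
        calc (2:ℝ)^n * (2 * π * h') ≤ ((a + π * hh)/(2*π*h')) * (2*π*h') :=
          mul_le_mul_of_nonneg_right htge (by positivity)
          _ = a + π * hh := by field_simp
      have h2 : a ≥ π * hh := by nlinarith
      have h3 := le_of_abs_le ha
      linarith
    refine ⟨2^n - 1, by omega, ?_⟩
    have hcast : ((2^n - 1 : ℕ) : ℝ) = (2:ℝ)^n - 1 := by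
      push_cast [Nat.cast_sub h1n]; ring
    rw [hcast, haeq, abs_le]
    constructor <;> nlinarith

lemma term_calc (lam p h : ℝ) (hh : 0 < h) (n : ℕ) :
    (2:ℝ)^n * ((h/2^(n+1)) ^ (lam-1) * (h/2^n) ^ (p-lam+1))
      = (2:ℝ) ^ ((1:ℝ)-lam) * h ^ p * ((2:ℝ) ^ ((1:ℝ)-p)) ^ n := by
  have h1 : (0:ℝ) < (2:ℝ)^n * ((h/2^(n+1)) ^ (lam-1) * (h/2^n) ^ (p-lam+1)) := by positivity
  have h2 : (0:ℝ) < (2:ℝ) ^ ((1:ℝ)-lam) * h ^ p * ((2:ℝ) ^ ((1:ℝ)-p)) ^ n := by positivity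
  rw [← Real.exp_log h1, ← Real.exp_log h2]
  congr 1
  rw [Real.log_mul (by positivity) (by positivity),
      Real.log_mul (by positivity) (by positivity),
      Real.log_mul (by positivity) (by positivity),
      Real.log_mul (by positivity) (by positivity),
      Real.log_pow, Real.log_pow,
      Real.log_rpow (by positivity), Real.log_rpow (by positivity),
      Real.log_rpow two_pos, Real.log_rpow two_pos, Real.log_rpow hh,
      Real.log_div (by positivity) (by positivity),
      Real.log_div (by positivity) (by positivity),
      Real.log_pow, Real.log_pow]
  push_cast
  ring

lemma meas_rpow_const (c : ℝ) : Measurable fun x : ℝ => x ^ c := by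
  have heq : (fun x : ℝ => x ^ c) = Set.piecewise {(0:ℝ)}
      (fun _ => if c = 0 then (1:ℝ) else 0)
      (Set.piecewise (Set.Ioi 0) (fun x => Real.exp (Real.log x * c))
        (fun x => Real.exp (Real.log x * c) * Real.cos (c * π))) := by
    funext x
    rcases lt_trichotomy x 0 with hx | hx | hx
    · rw [Set.piecewise_eq_of_notMem _ _ _
          (show x ∉ ({0} : Set ℝ) by simp [ne_of_lt hx]),
        Set.piecewise_eq_of_notMem _ _ _
          (show x ∉ Set.Ioi (0:ℝ) by simp [not_lt.mpr hx.le]),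
        Real.rpow_def_of_neg hx]
    · subst hx
      rw [Set.piecewise_eq_of_mem _ _ _ (show (0:ℝ) ∈ ({0} : Set ℝ) from rfl)]
      by_cases hc : c = 0 <;> simp [hc, Real.rpow_zero, Real.zero_rpow]
    · rw [Set.piecewise_eq_of_notMem _ _ _
          (show x ∉ ({0} : Set ℝ) by simp [ne_of_gt hx]),
        Set.piecewise_eq_of_mem _ _ _ (show x ∈ Set.Ioi (0:ℝ) from hx),
        Real.rpow_def_of_pos hx]
  rw [heq]
  exact Measurable.piecewise (measurableSet_singleton 0) measurable_const
    (Measurable.piecewise measurableSet_Ioi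
      ((Real.measurable_log.mul_const c).exp)
      (((Real.measurable_log.mul_const c).exp).mul_const _))

theorem stmt9 (lam p : ℝ) (h0 : 0 < lam) (h1 : lam < 1) (hp : 1 < p) :
    ∃ C > 0, ∀ (g : ℂ → ℂ) (M : ℝ), DifferentiableOn ℂ g UD → 0 ≤ M →
      (∀ θ : ℝ, ∀ h ∈ Ioc (0 : ℝ) 1,
        π⁻¹ * (∫ z in carleson θ h,
          ‖deriv g z‖ ^ 2 * (1 - ‖z‖ ^ 2) ^ p) ≤
            M ^ 2 * h ^ (p - lam + 1)) →
      ∀ θ : ℝ, ∀ h ∈ Ioc (0 : ℝ) 1,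
        π⁻¹ * (∫ z in carleson θ h,
          ‖deriv g z‖ ^ 2 * (1 - ‖z‖ ^ 2) ^ (p + lam - 1)) ≤
            C * M ^ 2 * h ^ p := by
  have hpi := Real.pi_pos
  set r : ℝ := 2 ^ ((1:ℝ)-p) with hrdef
  have hr0 : 0 < r := Real.rpow_pos_of_pos two_pos _
  have hr1 : r < 1 := Real.rpow_lt_one_of_one_lt_of_neg one_lt_two (by linarith)
  have hCpos : 0 < 2 ^ ((1:ℝ)-lam) * (1 - r)⁻¹ :=
    mul_pos (Real.rpow_pos_of_pos two_pos _) (inv_pos.mpr (by linarith))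
  refine ⟨2 ^ ((1:ℝ)-lam) * (1 - r)⁻¹, hCpos, ?_⟩
  intro g M hg hM hbound θ h hh
  obtain ⟨hh0, hh1⟩ := hh
  set G : ℂ → ℝ := fun z => ‖deriv g z‖ ^ 2
      * (1 - ‖z‖ ^ 2) ^ (p + lam - 1) with hGdef
  set F : ℂ → ℝ := fun z => ‖deriv g z‖ ^ 2
      * (1 - ‖z‖ ^ 2) ^ p with hFdef
  have hGmeas : Measurable G :=
    ((continuous_norm.measurable.comp (measurable_deriv g)).pow_const 2).mul
      ((meas_rpow_const (p+lam-1)).comp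
        (measurable_const.sub (continuous_norm.measurable.pow_const 2)))
  have hFmeas : Measurable F :=
    ((continuous_norm.measurable.comp (measurable_deriv g)).pow_const 2).mul
      ((meas_rpow_const p).comp
        (measurable_const.sub (continuous_norm.measurable.pow_const 2)))
  set S := carleson θ h with hSdef
  have hSm : MeasurableSet S := carleson_meas θ h
  have hRHS0 : 0 ≤ 2 ^ ((1:ℝ)-lam) * (1 - r)⁻¹ * M ^ 2 * h ^ p :=
    mul_nonneg (mul_nonneg hCpos.le (sq_nonneg M)) (Real.rpow_nonneg hh0.le p)
  by_cases hInt : IntegrableOn G S volume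
  swap
  · rw [integral_undef hInt, mul_zero]
    exact hRHS0
  -- pointwise facts
  have hbpos : ∀ z : ℂ, ‖z‖ < 1 → 0 < 1 - ‖z‖ ^ 2 := by
    intro z hz
    have h2 : ‖z‖ ^ 2 < 1 := pow_lt_one₀ (norm_nonneg z) hz (by norm_num)
    linarith
  have hG0 : ∀ z : ℂ, ‖z‖ < 1 → 0 ≤ G z := fun z hz =>
    mul_nonneg (pow_nonneg (norm_nonneg _) 2) (Real.rpow_nonneg (hbpos z hz).le _)
  have hF0 : ∀ z : ℂ, ‖z‖ < 1 → 0 ≤ F z := fun z hz =>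
    mul_nonneg (pow_nonneg (norm_nonneg _) 2) (Real.rpow_nonneg (hbpos z hz).le _)
  have hFG : ∀ z : ℂ, ‖z‖ < 1 → F z ≤ G z := by
    intro z hz
    apply mul_le_mul_of_nonneg_left _ (pow_nonneg (norm_nonneg _) 2)
    have hsq : (0:ℝ) ≤ ‖z‖ ^ 2 := sq_nonneg _
    exact Real.rpow_le_rpow_of_exponent_ge (hbpos z hz) (by linarith) (by linarith)
  -- per-box bound
  have boxbound : ∀ θ' h', h' ∈ Ioc (0:ℝ) 1 → carleson θ' h' ⊆ S →
      (∫⁻ z in carleson θ' h', ENNReal.ofReal (F z))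
        ≤ ENNReal.ofReal (π * (M ^ 2 * h' ^ (p - lam + 1))) := by
    intro θ' h' hI hsub
    have hGint : IntegrableOn G (carleson θ' h') volume := hInt.mono_set hsub
    have haein : ∀ᵐ z ∂(volume.restrict (carleson θ' h')), z ∈ carleson θ' h' :=
      ae_restrict_mem (carleson_meas θ' h')
    have hFint : IntegrableOn F (carleson θ' h') volume := by
      refine hGint.mono' hFmeas.aestronglyMeasurable ?_
      filter_upwards [haein] with z hz
      rw [Real.norm_eq_abs, abs_of_nonneg (hF0 z hz.2.1)]
      exact hFG z hz.2.1
    have hFae : 0 ≤ᵐ[volume.restrict (carleson θ' h')] F := by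
      filter_upwards [haein] with z hz
      exact hF0 z hz.2.1
    have heq : ∫ z in carleson θ' h', F z
        = (∫⁻ z in carleson θ' h', ENNReal.ofReal (F z)).toReal :=
      integral_eq_lintegral_of_nonneg_ae hFae hFmeas.aestronglyMeasurable
    have hfin : (∫⁻ z in carleson θ' h', ENNReal.ofReal (F z)) ≠ ⊤ := by
      have hle : (∫⁻ z in carleson θ' h', ENNReal.ofReal (F z))
          ≤ ∫⁻ z in carleson θ' h', (‖F z‖₊ : ℝ≥0∞) := by
        apply lintegral_mono
        intro z
        show ENNReal.ofReal (F z) ≤ (‖F z‖₊ : ℝ≥0∞)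
        rw [show ((‖F z‖₊ : ℝ≥0∞)) = ENNReal.ofReal |F z| from Real.enorm_eq_ofReal_abs _]
        exact ENNReal.ofReal_le_ofReal (le_abs_self _)
      exact ne_top_of_le_ne_top hFint.2.ne hle
    have hIle : ∫ z in carleson θ' h', F z ≤ π * (M ^ 2 * h' ^ (p - lam + 1)) := by
      have h2 := hbound θ' h' hI
      calc ∫ z in carleson θ' h', F z
          = π * (π⁻¹ * ∫ z in carleson θ' h', F z) := by field_simp
        _ ≤ π * (M ^ 2 * h' ^ (p - lam + 1)) := mul_le_mul_of_nonneg_left h2 hpi.le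
    calc (∫⁻ z in carleson θ' h', ENNReal.ofReal (F z))
        = ENNReal.ofReal ((∫⁻ z in carleson θ' h', ENNReal.ofReal (F z)).toReal) :=
          (ENNReal.ofReal_toReal hfin).symm
      _ ≤ ENNReal.ofReal (π * (M ^ 2 * h' ^ (p - lam + 1))) := by
          apply ENNReal.ofReal_le_ofReal
          rw [← heq]
          exact hIle
  -- dyadic data
  have h1n : ∀ n : ℕ, (1:ℝ) ≤ (2:ℝ)^n := fun n => by
    exact_mod_cast Nat.one_le_two_pow
  have hIoc' : ∀ n : ℕ, h / 2^n ∈ Ioc (0:ℝ) 1 := by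
    intro n
    refine ⟨by positivity, le_trans (div_le_self hh0.le (h1n n)) hh1⟩
  have hsum : ∀ n : ℕ, (2:ℝ)^n * (h/2^n) = h := fun n => by field_simp
  -- the subboxes sit inside S
  have hBsub : ∀ n : ℕ, ∀ j : Fin (2^n),
      carleson (θ + (-π*h + (2*((j:ℕ):ℝ)+1) * (π * (h/2^n)))) (h/2^n) ⊆ S := by
    intro n j
    apply carleson_subset (hIoc' n).1 hh1
    have hj : ((j:ℕ):ℝ) ≤ (2:ℝ)^n - 1 := by
      have h2 : ((j:ℕ):ℝ) + 1 ≤ ((2^n : ℕ):ℝ) := by exact_mod_cast j.2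
      push_cast at h2
      linarith
    have hj0 : (0:ℝ) ≤ ((j:ℕ):ℝ) := Nat.cast_nonneg _
    have hh'pos : 0 < π * (h/2^n) := by positivity
    have hs := hsum n
    rw [abs_le]
    constructor <;> nlinarith
  -- covering
  have hcover : ∀ n : ℕ, ∀ z ∈ S, 1 - h/2^n ≤ ‖z‖ →
      ∃ j : Fin (2^n),
        z ∈ carleson (θ + (-π*h + (2*((j:ℕ):ℝ)+1) * (π * (h/2^n)))) (h/2^n) := by
    intro n z hz hrad
    obtain ⟨hz1, hz2, hz3⟩ := hz
    obtain ⟨m, hm, hmid⟩ := midpoint_select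
      (Complex.arg (z * Complex.exp (-((θ:ℂ) * Complex.I)))) h (h/2^n)
      (hIoc' n).1 n (hsum n) hz3
    have hple : π * (h/2^n) ≤ π := by
      have := (hIoc' n).2
      nlinarith
    refine ⟨⟨m, hm⟩, hrad, hz2, ?_⟩
    show |Complex.arg (z * Complex.exp
        (-((↑(θ + (-π*h + (2*(m:ℝ)+1) * (π * (h/2^n)))) : ℂ) * Complex.I)))| ≤ π * (h/2^n)
    have key : z * Complex.exp
          (-((↑(θ + (-π*h + (2*(m:ℝ)+1) * (π * (h/2^n)))) : ℂ) * Complex.I))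
        = (z * Complex.exp (-((θ:ℂ) * Complex.I)))
          * Complex.exp (-((((-π*h + (2*(m:ℝ)+1) * (π * (h/2^n))) : ℝ) : ℂ) * Complex.I)) := by
      rw [mul_assoc, ← Complex.exp_add]
      congr 1
      push_cast
      ring
    rw [key]
    exact le_trans (arg_shift_le _ _ (le_trans hmid hple)) hmid
  -- annuli
  set An : ℕ → Set ℂ := fun n =>
    {z : ℂ | 1 - h/2^n ≤ ‖z‖ ∧ ‖z‖ < 1 - h/2^(n+1)} with hAdef
  have hSsub : S ⊆ ⋃ n : ℕ, (S ∩ An n) := by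
    intro z hz
    have hz2 : ‖z‖ < 1 := hz.2.1
    have hε : 0 < 1 - ‖z‖ := by linarith
    have hex : ∃ n : ℕ, h / 2^(n+1) < 1 - ‖z‖ := by
      obtain ⟨n, hn⟩ := exists_pow_lt_of_lt_one (div_pos hε hh0) (by norm_num : (1:ℝ)/2 < 1)
      refine ⟨n, ?_⟩
      have e1 : ((1:ℝ)/2)^(n+1) ≤ ((1:ℝ)/2)^n :=
        pow_le_pow_of_le_one (by norm_num) (by norm_num) (Nat.le_succ n)
      have e2 : h * ((1/2:ℝ))^(n+1) = h / 2^(n+1) := by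
        rw [div_pow]
        ring
      have e3 : h * ((1-‖z‖)/h) = 1 - ‖z‖ := by field_simp
      calc h / 2^(n+1) = h * ((1/2:ℝ))^(n+1) := e2.symm
        _ ≤ h * ((1/2:ℝ))^n := by nlinarith
        _ < h * ((1-‖z‖)/h) := by
            exact mul_lt_mul_of_pos_left hn hh0
        _ = 1 - ‖z‖ := e3
    refine mem_iUnion.mpr ⟨Nat.find hex, hz, ?_, ?_⟩
    · show 1 - h/2^(Nat.find hex) ≤ ‖z‖
      cases hfind : Nat.find hex with
      | zero => simpa using hz.1
      | succ k =>
          have hk := Nat.find_min hex (show k < Nat.find hex by omega)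
          push_neg at hk
          linarith
    · show ‖z‖ < 1 - h/2^(Nat.find hex + 1)
      have := Nat.find_spec hex
      linarith
  -- per-annulus estimate
  have hannulus : ∀ n : ℕ, (∫⁻ z in S ∩ An n, ENNReal.ofReal (G z))
      ≤ ENNReal.ofReal (π * (M ^ 2 * ((2:ℝ) ^ ((1:ℝ)-lam) * h ^ p))) * (ENNReal.ofReal r) ^ n := by
    intro n
    have hstep1 : (∫⁻ z in S ∩ An n, ENNReal.ofReal (G z))
        ≤ ∫⁻ z in S ∩ An n, ENNReal.ofReal ((h/2^(n+1)) ^ (lam-1)) * ENNReal.ofReal (F z) := by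
      apply setLIntegral_mono (measurable_const.mul hFmeas.ennreal_ofReal)
      intro z hz
      have hzlt : ‖z‖ < 1 := hz.1.2.1
      have hb0 := hbpos z hzlt
      have hbl : h / 2^(n+1) < 1 - ‖z‖ ^ 2 := by
        have ha1 : ‖z‖ ^ 2 ≤ ‖z‖ := by
          nlinarith [norm_nonneg z]
        have ha2 : ‖z‖ < 1 - h/2^(n+1) := hz.2.2
        linarith
      have hsplit : G z = F z * (1 - ‖z‖ ^ 2) ^ (lam - 1) := by
        show ‖deriv g z‖ ^ 2 * (1 - ‖z‖ ^ 2) ^ (p + lam - 1)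
          = ‖deriv g z‖ ^ 2 * (1 - ‖z‖ ^ 2) ^ p
            * (1 - ‖z‖ ^ 2) ^ (lam - 1)
        rw [mul_assoc, ← Real.rpow_add hb0]
        congr 1
        ring_nf
      calc ENNReal.ofReal (G z)
          = ENNReal.ofReal ((1 - ‖z‖ ^ 2) ^ (lam-1) * F z) := by
            rw [hsplit, mul_comm]
        _ ≤ ENNReal.ofReal ((h/2^(n+1)) ^ (lam-1) * F z) := by
            apply ENNReal.ofReal_le_ofReal
            apply mul_le_mul_of_nonneg_right _ (hF0 z hzlt)
            exact Real.rpow_le_rpow_of_nonpos (by positivity) hbl.le (by linarith)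
        _ = ENNReal.ofReal ((h/2^(n+1)) ^ (lam-1)) * ENNReal.ofReal (F z) :=
            ENNReal.ofReal_mul (by positivity)
    have hstep2 : (∫⁻ z in S ∩ An n,
          ENNReal.ofReal ((h/2^(n+1)) ^ (lam-1)) * ENNReal.ofReal (F z))
        = ENNReal.ofReal ((h/2^(n+1)) ^ (lam-1)) * ∫⁻ z in S ∩ An n, ENNReal.ofReal (F z) :=
      lintegral_const_mul _ hFmeas.ennreal_ofReal
    have hstep3 : (∫⁻ z in S ∩ An n, ENNReal.ofReal (F z))
        ≤ ∑' j : Fin (2^n), ∫⁻ z in carleson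
            (θ + (-π*h + (2*((j:ℕ):ℝ)+1) * (π * (h/2^n)))) (h/2^n), ENNReal.ofReal (F z) := by
      refine le_trans (lintegral_mono_set ?_) (lintegral_iUnion_le _ _)
      intro z hz
      obtain ⟨j, hj⟩ := hcover n z hz.1 hz.2.1
      exact mem_iUnion.mpr ⟨j, hj⟩
    have hstep4 : (∑' j : Fin (2^n), ∫⁻ z in carleson
            (θ + (-π*h + (2*((j:ℕ):ℝ)+1) * (π * (h/2^n)))) (h/2^n), ENNReal.ofReal (F z))
        ≤ ∑' _j : Fin (2^n), ENNReal.ofReal (π * (M^2 * (h/2^n) ^ (p-lam+1))) :=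
      ENNReal.tsum_le_tsum (fun j => boxbound _ _ (hIoc' n) (hBsub n j))
    have hstep5 : (∑' _j : Fin (2^n), ENNReal.ofReal (π * (M^2 * (h/2^n) ^ (p-lam+1))))
        = ((2^n : ℕ) : ℝ≥0∞) * ENNReal.ofReal (π * (M^2 * (h/2^n) ^ (p-lam+1))) := by
      rw [tsum_fintype]
      simp [Finset.sum_const, Finset.card_univ, nsmul_eq_mul]
    calc (∫⁻ z in S ∩ An n, ENNReal.ofReal (G z))
        ≤ ENNReal.ofReal ((h/2^(n+1)) ^ (lam-1))
            * (((2^n : ℕ) : ℝ≥0∞) * ENNReal.ofReal (π * (M^2 * (h/2^n) ^ (p-lam+1)))) := by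
          rw [← hstep5]
          refine le_trans hstep1 (le_trans (le_of_eq hstep2) ?_)
          exact mul_le_mul_right (le_trans hstep3 hstep4) _
      _ = ENNReal.ofReal ((2:ℝ)^n * ((h/2^(n+1)) ^ (lam-1)
            * (π * (M^2 * (h/2^n) ^ (p-lam+1))))) := by
          rw [ENNReal.ofReal_mul (by positivity : (0:ℝ) ≤ (2:ℝ)^n),
            ENNReal.ofReal_mul (by positivity : (0:ℝ) ≤ (h/2^(n+1)) ^ (lam-1)),
            show ((2:ℝ)^n) = ((2^n : ℕ) : ℝ) by push_cast; ring,
            ENNReal.ofReal_natCast]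
          ring
      _ = ENNReal.ofReal (π * (M^2 * ((2:ℝ) ^ ((1:ℝ)-lam) * h ^ p)) * r^n) := by
          congr 1
          have htc := term_calc lam p h hh0 n
          linear_combination (π * M^2 * (h/2^n) ^ (p-lam+1) / ((h/2^n) ^ (p-lam+1))) * 0 + π * M^2 * htc
      _ = ENNReal.ofReal (π * (M^2 * ((2:ℝ) ^ ((1:ℝ)-lam) * h ^ p))) * (ENNReal.ofReal r) ^ n := by
          rw [ENNReal.ofReal_mul (by positivity), ENNReal.ofReal_pow hr0.le]
  -- sum up
  have htotal : (∫⁻ z in S, ENNReal.ofReal (G z))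
      ≤ ENNReal.ofReal (π * (M^2 * ((2:ℝ) ^ ((1:ℝ)-lam) * h ^ p))) * (1 - ENNReal.ofReal r)⁻¹ := by
    calc (∫⁻ z in S, ENNReal.ofReal (G z))
        ≤ ∫⁻ z in ⋃ n : ℕ, (S ∩ An n), ENNReal.ofReal (G z) := lintegral_mono_set hSsub
      _ ≤ ∑' n : ℕ, ∫⁻ z in S ∩ An n, ENNReal.ofReal (G z) := lintegral_iUnion_le _ _
      _ ≤ ∑' n : ℕ, ENNReal.ofReal (π * (M^2 * ((2:ℝ) ^ ((1:ℝ)-lam) * h ^ p)))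
            * (ENNReal.ofReal r) ^ n := ENNReal.tsum_le_tsum hannulus
      _ = ENNReal.ofReal (π * (M^2 * ((2:ℝ) ^ ((1:ℝ)-lam) * h ^ p)))
            * (1 - ENNReal.ofReal r)⁻¹ := by
          rw [ENNReal.tsum_mul_left, ENNReal.tsum_geometric]
  -- finish
  have hGae : 0 ≤ᵐ[volume.restrict S] G := by
    filter_upwards [ae_restrict_mem hSm] with z hz using hG0 z hz.2.1
  rw [integral_eq_lintegral_of_nonneg_ae hGae hGmeas.aestronglyMeasurable]
  have hor1 : ENNReal.ofReal r < 1 := ENNReal.ofReal_lt_one.mpr hr1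
  have hsubne : (1 - ENNReal.ofReal r) ≠ 0 := by
    rw [ne_eq, tsub_eq_zero_iff_le]
    exact not_le.mpr hor1
  have hne : ENNReal.ofReal (π * (M^2 * ((2:ℝ) ^ ((1:ℝ)-lam) * h ^ p)))
      * (1 - ENNReal.ofReal r)⁻¹ ≠ ⊤ :=
    ENNReal.mul_ne_top ENNReal.ofReal_ne_top (ENNReal.inv_ne_top.mpr hsubne)
  have hmono := ENNReal.toReal_mono hne htotal
  have hrhs : (ENNReal.ofReal (π * (M^2 * ((2:ℝ) ^ ((1:ℝ)-lam) * h ^ p)))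
        * (1 - ENNReal.ofReal r)⁻¹).toReal
      = π * (M^2 * ((2:ℝ) ^ ((1:ℝ)-lam) * h ^ p)) * (1-r)⁻¹ := by
    rw [ENNReal.toReal_mul, ENNReal.toReal_ofReal (by positivity), ENNReal.toReal_inv,
      ENNReal.toReal_sub_of_le hor1.le ENNReal.one_ne_top, ENNReal.toReal_one,
      ENNReal.toReal_ofReal hr0.le]
  rw [hrhs] at hmono
  calc π⁻¹ * (∫⁻ z in S, ENNReal.ofReal (G z)).toReal
      ≤ π⁻¹ * (π * (M^2 * ((2:ℝ) ^ ((1:ℝ)-lam) * h ^ p)) * (1-r)⁻¹) :=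
        mul_le_mul_of_nonneg_left hmono (inv_nonneg.mpr hpi.le)
    _ = 2 ^ ((1:ℝ)-lam) * (1 - r)⁻¹ * M ^ 2 * h ^ p := by
        field_simp
end
end
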